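/- Let v ∈ V_l and let λ be a FLOTW l-partition of multicharge v. Let γ₁ = (a₁,b₁,c₁) and γ₂ = (a₂,b₂,c₂) be i-nodes (for the same i ∈ ℤ/eℤ), each of which is either an addable or a removable i-node of λ. If λ^{(c₁)}_{a₁} < λ^{(c₂)}_{a₂}, then γ₁ ≺_v γ₂. -/

import Mathlib

/-- An `l`-multipartition: `part c a` is the `(a+1)`-st part (0-based row index `a`)
of the partition `λ^{(c)}`. Parts are weakly decreasing and eventually zero. -/
structure MultiPartition (l : ℕ) where
  part : Fin l → ℕ → ℕ
  antitone : ∀ c : Fin l, ∀ a b : ℕ, a ≤ b → part c b ≤ part c a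
  finite : ∃ N : ℕ, ∀ c : Fin l, ∀ a : ℕ, N ≤ a → part c a = 0

namespace MultiPartition

variable {l : ℕ}

/-- A node is a triple `(a, b, c)`: row `a`, column `b` (both 0-based), component `c`.
The node `(a, b, c)` belongs to `lam` iff `b < lam.part c a`. -/
def content (v : Fin l → ℤ) (γ : ℕ × ℕ × Fin l) : ℤ :=
  (γ.2.1 : ℤ) - (γ.1 : ℤ) + v γ.2.2

def res (e : ℕ) (v : Fin l → ℤ) (γ : ℕ × ℕ × Fin l) : ZMod e :=
  ((content v γ : ℤ) : ZMod e)

/-- The total order `≺_v` on `i`-nodes. -/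
def prec (v : Fin l → ℤ) (γ δ : ℕ × ℕ × Fin l) : Prop :=
  content v γ < content v δ ∨ (content v γ = content v δ ∧ δ.2.2 < γ.2.2)

/-- `γ = (a,b,c)` is a removable node of `lam`: it is the last node of its row
(`lam.part c a = b + 1`) and removing it leaves a multipartition. -/
def Removable (lam : MultiPartition l) (γ : ℕ × ℕ × Fin l) : Prop :=
  lam.part γ.2.2 γ.1 = γ.2.1 + 1 ∧ lam.part γ.2.2 (γ.1 + 1) ≤ γ.2.1

/-- `γ = (a,b,c)` is an addable node of `lam`: it sits just beyond its row
(`lam.part c a = b`) and adding it yields a multipartition. -/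
def Addable (lam : MultiPartition l) (γ : ℕ × ℕ × Fin l) : Prop :=
  lam.part γ.2.2 γ.1 = γ.2.1 ∧ (γ.1 = 0 ∨ γ.2.1 < lam.part γ.2.2 (γ.1 - 1))

/-- The set `V_l` of multicharges: `v_0 ≤ v_1 ≤ ⋯ ≤ v_{l-1} < v_0 + e`. -/
def memV (e : ℕ) [NeZero l] (v : Fin l → ℤ) : Prop :=
  Monotone v ∧ ∀ c : Fin l, v c < v 0 + e

/-- FLOTW condition for an `l`-partition with multicharge `v ∈ V_l`. -/
def IsFLOTW (e : ℕ) [NeZero l] (v : Fin l → ℤ) (lam : MultiPartition l) : Prop :=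
  (∀ c : Fin l, ∀ h : (c : ℕ) + 1 < l, ∀ a : ℕ,
      lam.part ⟨(c : ℕ) + 1, h⟩ (a + (v ⟨(c : ℕ) + 1, h⟩ - v c).toNat) ≤ lam.part c a)
  ∧ (∀ a : ℕ,
      lam.part 0 (a + ((e : ℤ) + v 0 -
          v ⟨l - 1, Nat.sub_lt (Nat.pos_of_ne_zero (NeZero.ne l)) Nat.one_pos⟩).toNat)
        ≤ lam.part ⟨l - 1, Nat.sub_lt (Nat.pos_of_ne_zero (NeZero.ne l)) Nat.one_pos⟩ a)
  ∧ ∀ k : ℕ, 1 ≤ k → ∃ i : ZMod e, ∀ c : Fin l, ∀ a : ℕ,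
      lam.part c a = k → (((k : ℤ) - ((a : ℤ) + 1) + v c : ℤ) : ZMod e) ≠ i

end MultiPartition


section Aux
open MultiPartition

variable {l : ℕ}

/-- Chaining the first FLOTW condition up consecutive components. -/
lemma chain1 (v : Fin l → ℤ) (hv : Monotone v) (lam : MultiPartition l)
    (h1 : ∀ c : Fin l, ∀ h : (c : ℕ) + 1 < l, ∀ a : ℕ,
      lam.part ⟨(c : ℕ) + 1, h⟩ (a + (v ⟨(c : ℕ) + 1, h⟩ - v c).toNat) ≤ lam.part c a) :
    ∀ k : ℕ, ∀ c : ℕ, ∀ hck : c + k < l, ∀ a : ℕ,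
      lam.part ⟨c + k, hck⟩ (a + (v ⟨c + k, hck⟩ - v ⟨c, by omega⟩).toNat)
        ≤ lam.part ⟨c, by omega⟩ a := by
  intro k
  induction k with
  | zero => intro c hck a; simp
  | succ k ih =>
    intro c hck a
    have hck' : c + k < l := by omega
    have hc : c < l := by omega
    have hmono1 : v ⟨c, hc⟩ ≤ v ⟨c + k, hck'⟩ := hv (by simp [Fin.le_def])
    have hmono2 : v ⟨c + k, hck'⟩ ≤ v ⟨c + k + 1, hck⟩ := hv (by simp [Fin.le_def])
    have hsplit : (v ⟨c + k + 1, hck⟩ - v ⟨c, hc⟩).toNat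
        = (v ⟨c + k, hck'⟩ - v ⟨c, hc⟩).toNat
          + (v ⟨c + k + 1, hck⟩ - v ⟨c + k, hck'⟩).toNat := by omega
    have h1' := h1 ⟨c + k, hck'⟩ (by simp; omega)
      (a + (v ⟨c + k, hck'⟩ - v ⟨c, hc⟩).toNat)
    have ih' := ih c hck' a
    show lam.part ⟨c + k + 1, hck⟩ (a + (v ⟨c + k + 1, hck⟩ - v ⟨c, hc⟩).toNat)
        ≤ lam.part ⟨c, hc⟩ a
    rw [hsplit, ← Nat.add_assoc]
    exact le_trans h1' ih'

/-- Chaining once around the cycle. -/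
lemma chain_wrap (e : ℕ) [NeZero l] (v : Fin l → ℤ) (hv : memV e v)
    (lam : MultiPartition l) (hlam : IsFLOTW e v lam) (c d : Fin l) (a : ℕ) :
    lam.part d (a + (v d - v c + e).toNat) ≤ lam.part c a := by
  have hl : 0 < l := Nat.pos_of_ne_zero (NeZero.ne l)
  set L : Fin l := ⟨l - 1, Nat.sub_lt hl Nat.one_pos⟩ with hL
  have hcL : v c ≤ v L := hv.1 (by simp [Fin.le_def, hL]; omega)
  have h0d : v 0 ≤ v d := hv.1 (by simp [Fin.le_def] : (0 : Fin l) ≤ d)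
  have hLe : v L < v 0 + e := hv.2 L
  -- step 1 : c up to L
  have step1 : lam.part L (a + (v L - v c).toNat) ≤ lam.part c a := by
    have := chain1 v hv.1 lam hlam.1 (l - 1 - (c : ℕ)) (c : ℕ)
      (by omega) a
    have hcast : (⟨(c : ℕ) + (l - 1 - (c : ℕ)), by omega⟩ : Fin l) = L := by
      simp [hL, Fin.ext_iff]; omega
    simpa [hcast] using this
  -- step 2 : wrap L to 0
  have step2 := hlam.2.1 (a + (v L - v c).toNat)
  -- step 3 : 0 up to d
  have step3 : lam.part d
      ((a + (v L - v c).toNat + ((e : ℤ) + v 0 - v L).toNat) + (v d - v 0).toNat)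
        ≤ lam.part 0 (a + (v L - v c).toNat + ((e : ℤ) + v 0 - v L).toNat) := by
    have := chain1 v hv.1 lam hlam.1 (d : ℕ) 0 (by omega)
      (a + (v L - v c).toNat + ((e : ℤ) + v 0 - v L).toNat)
    have hcast : (⟨0 + (d : ℕ), by omega⟩ : Fin l) = d := by
      simp [Fin.ext_iff]
    have hcast0 : (⟨0, hl⟩ : Fin l) = 0 := by simp [Fin.ext_iff]
    simpa [hcast, hcast0] using this
  have hidx : a + (v L - v c).toNat + ((e : ℤ) + v 0 - v L).toNat + (v d - v 0).toNat
      = a + (v d - v c + e).toNat := by omega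
  calc lam.part d (a + (v d - v c + e).toNat)
      = lam.part d
        ((a + (v L - v c).toNat + ((e : ℤ) + v 0 - v L).toNat) + (v d - v 0).toNat) := by
        rw [hidx]
    _ ≤ lam.part 0 (a + (v L - v c).toNat + ((e : ℤ) + v 0 - v L).toNat) := step3
    _ ≤ lam.part L (a + (v L - v c).toNat) := step2
    _ ≤ lam.part c a := step1

/-- General chained inequality: shifting by `v d - v c + m·e`. -/
lemma chain_gen (e : ℕ) [NeZero l] (v : Fin l → ℤ) (hv : memV e v)
    (lam : MultiPartition l) (hlam : IsFLOTW e v lam) (c d : Fin l) (m : ℕ)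
    (hcd : c ≤ d ∨ 1 ≤ m) (a : ℕ) :
    lam.part d (a + (v d - v c + m * e).toNat) ≤ lam.part c a := by
  rcases hcd with hcd | hm
  · have hvc : v c ≤ v d := hv.1 hcd
    have hsplit : (v d - v c + m * e).toNat = m * e + (v d - v c).toNat := by
      have key : v d - v c + (m : ℤ) * e = ((m * e : ℕ) : ℤ) + (v d - v c) := by
        push_cast; ring
      rw [key, Int.toNat_add (by positivity) (by omega)]
      omega
    have h1 : lam.part d ((a + m * e) + (v d - v c).toNat) ≤ lam.part c (a + m * e) := by
      have := chain1 v hv.1 lam hlam.1 ((d : ℕ) - (c : ℕ)) (c : ℕ)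
        (by omega) (a + m * e)
      have hd' : (⟨(c : ℕ) + ((d : ℕ) - (c : ℕ)), by omega⟩ : Fin l) = d := by
        have : (c : ℕ) ≤ (d : ℕ) := hcd
        simp [Fin.ext_iff]; omega
      have hc' : (⟨(c : ℕ), c.isLt⟩ : Fin l) = c := by simp
      simpa [hd', hc'] using this
    calc lam.part d (a + (v d - v c + m * e).toNat)
        = lam.part d ((a + m * e) + (v d - v c).toNat) := by rw [hsplit]; ring_nf
      _ ≤ lam.part c (a + m * e) := h1
      _ ≤ lam.part c a := lam.antitone c a (a + m * e) (by omega)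
  · have hvd : v 0 ≤ v d := hv.1 (by simp [Fin.le_def] : (0 : Fin l) ≤ d)
    have hvc : v c < v 0 + e := hv.2 c
    have hwrap : (0 : ℤ) ≤ v d - v c + e := by omega
    have hsplit : (v d - v c + m * e).toNat = (m - 1) * e + (v d - v c + e).toNat := by
      have h3 : ((m - 1 : ℕ) : ℤ) = (m : ℤ) - 1 := by omega
      have key : v d - v c + (m : ℤ) * e = (((m - 1) * e : ℕ) : ℤ) + (v d - v c + e) := by
        push_cast [h3]; ring
      rw [key, Int.toNat_add (by positivity) hwrap]
      omega
    calc lam.part d (a + (v d - v c + m * e).toNat)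
        = lam.part d ((a + (m - 1) * e) + (v d - v c + e).toNat) := by rw [hsplit]; ring_nf
      _ ≤ lam.part c (a + (m - 1) * e) := chain_wrap e v hv lam hlam c d _
      _ ≤ lam.part c a := lam.antitone c a (a + (m - 1) * e) (by omega)

end Aux

open MultiPartition in
/-- for a FLOTW `l`-partition, among addable/removable `i`-nodes,
strictly shorter row length forces strictly smaller position in `≺_v`. -/
theorem flotw_len_lt_prec (e l : ℕ) [NeZero l] (he : 2 ≤ e)
    (v : Fin l → ℤ) (hv : memV e v)
    (lam : MultiPartition l) (hlam : IsFLOTW e v lam) (i : ZMod e)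
    (γ₁ γ₂ : ℕ × ℕ × Fin l)
    (h₁ : Removable lam γ₁ ∨ Addable lam γ₁) (hres₁ : res e v γ₁ = i)
    (h₂ : Removable lam γ₂ ∨ Addable lam γ₂) (hres₂ : res e v γ₂ = i)
    (hlen : lam.part γ₁.2.2 γ₁.1 < lam.part γ₂.2.2 γ₂.1) :
    prec v γ₁ γ₂ := by
  obtain ⟨a₁, b₁, c₁⟩ := γ₁
  obtain ⟨a₂, b₂, c₂⟩ := γ₂
  simp only [Removable, Addable] at h₁ h₂
  simp only [prec, content] at *
  by_contra hcon
  push_neg at hcon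
  obtain ⟨hC, hc⟩ := hcon
  -- equal residues mod e
  have hee : (e : ℤ) ≠ 0 := by exact_mod_cast (by omega : e ≠ 0)
  have hdvd : (e : ℤ) ∣ ((b₁ : ℤ) - a₁ + v c₁) - ((b₂ : ℤ) - a₂ + v c₂) := by
    have h := hres₁.trans hres₂.symm
    simp only [res, content] at h
    have := (ZMod.intCast_eq_intCast_iff _ _ _).mp h
    exact Int.ModEq.dvd this.symm
  obtain ⟨m', hm'⟩ := hdvd
  have hm'0 : 0 ≤ m' := by
    by_contra hneg
    push_neg at hneg
    have he1 : (1 : ℤ) ≤ e := by exact_mod_cast (by omega : 1 ≤ e)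
    have h0 : (0 : ℤ) ≤ (e : ℤ) * m' := by rw [← hm']; linarith
    have h2 : (e : ℤ) * m' ≤ (e : ℤ) * (-1) :=
      mul_le_mul_of_nonneg_left (by omega) (by linarith)
    linarith
  set m : ℕ := m'.toNat with hmdef
  have hmcast : (m : ℤ) = m' := Int.toNat_of_nonneg hm'0
  -- bounds on b from addable/removable
  have hb₁ : b₁ ≤ lam.part c₁ a₁ ∧ lam.part c₁ a₁ ≤ b₁ + 1 := by
    rcases h₁ with h | h <;> omega
  have hb₂ : b₂ ≤ lam.part c₂ a₂ ∧ lam.part c₂ a₂ ≤ b₂ + 1 := by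
    rcases h₂ with h | h <;> omega
  -- the Or hypothesis for chain_gen
  have hor : c₁ ≤ c₂ ∨ 1 ≤ m := by
    rcases Nat.eq_zero_or_pos m with h0 | h1
    · left
      have hm0 : m' = 0 := by omega
      have heq : (b₁ : ℤ) - a₁ + v c₁ = (b₂ : ℤ) - a₂ + v c₂ := by
        rw [hm0] at hm'; linarith [hm']
      exact hc heq
    · right; exact h1
  -- nonnegativity of shift and index inequality
  have hshift0 : (0 : ℤ) ≤ v c₂ - v c₁ + m * e := by
    rcases hor with hle | h1
    · have : v c₁ ≤ v c₂ := hv.1 hle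
      have : (0 : ℤ) ≤ (m : ℤ) * e := by positivity
      omega
    · have h0c : v 0 ≤ v c₂ := hv.1 (by simp [Fin.le_def] : (0 : Fin l) ≤ c₂)
      have hc1 : v c₁ < v 0 + e := hv.2 c₁
      have : (e : ℤ) ≤ (m : ℤ) * e := by
        have : (1 : ℤ) ≤ (m : ℤ) := by exact_mod_cast h1
        nlinarith
      omega
  have hidx : a₁ + (v c₂ - v c₁ + m * e).toNat ≤ a₂ := by
    have key : (a₂ : ℤ) - a₁ - (v c₂ - v c₁ + m * e) = (b₂ : ℤ) - b₁ := by
      rw [hmcast]; linarith [hm']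
    have hbb : (b₁ : ℤ) ≤ b₂ := by
      have h1 := hb₁.1
      have h2 := hb₂.2
      omega
    omega
  have := chain_gen e v hv lam hlam c₁ c₂ m hor a₁
  have := lam.antitone c₂ (a₁ + (v c₂ - v c₁ + m * e).toNat) a₂ hidx
  omega
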